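/- If f : [0,1] → X is continuous, the limit g(t) := lim_{k→∞} k·(f(t) − f(t−1/k)) exists uniformly in t ∈ (0,1], and additionally lim_{t↘0} g(t) =: g(0) exists, then f is continuously differentiable on [0,1] with derivative g. -/

import Mathlib

open Set Filter MeasureTheory intervalIntegral
open scoped Topology

section aux

variable {X : Type*} [NormedAddCommGroup X] [NormedSpace ℝ X] [CompleteSpace X]

private lemma aux_int (f : ℝ → X) (hf : ContinuousOn f (Set.Icc 0 1)) {a b : ℝ}
    (ha : a ∈ Set.Icc (0:ℝ) 1) (hb : b ∈ Set.Icc (0:ℝ) 1) :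
    IntervalIntegrable f volume a b :=
  (hf.mono (Set.uIcc_subset_Icc ha hb)).intervalIntegrable

private lemma aux_ftc (f : ℝ → X) (hf : ContinuousOn f (Set.Icc 0 1)) {t : ℝ}
    (ht : t ∈ Set.Icc (0:ℝ) 1) :
    HasDerivWithinAt (fun u => ∫ x in (0:ℝ)..u, f x) (f t) (Set.Icc 0 1) t := by
  haveI : Fact (t ∈ Set.Icc (0:ℝ) 1) := ⟨ht⟩
  exact intervalIntegral.integral_hasDerivWithinAt_right
    (aux_int f hf ⟨le_rfl, zero_le_one⟩ ht)
    (hf.stronglyMeasurableAtFilter_nhdsWithin measurableSet_Icc t)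
    (hf t ht)

private lemma aux_avg (f : ℝ → X) (hf : ContinuousOn f (Set.Icc 0 1)) {t : ℝ}
    (ht : t ∈ Set.Ioc (0:ℝ) 1) :
    Filter.Tendsto (fun k : ℕ => (k:ℝ) •
        ((∫ x in (0:ℝ)..t, f x) - ∫ x in (0:ℝ)..(t - (k:ℝ)⁻¹), f x))
      Filter.atTop (nhds (f t)) := by
  set F : ℝ → X := fun u => ∫ x in (0:ℝ)..u, f x with hFdef
  have hD := aux_ftc f hf ⟨ht.1.le, ht.2⟩
  rw [hasDerivWithinAt_iff_tendsto_slope] at hD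
  have hinv : Tendsto (fun k : ℕ => (k:ℝ)⁻¹) atTop (𝓝 0) :=
    tendsto_inv_atTop_nhds_zero_nat
  have hev : ∀ᶠ k : ℕ in atTop, 0 < (k:ℝ)⁻¹ ∧ (k:ℝ)⁻¹ < t := by
    filter_upwards [eventually_ge_atTop 1, hinv.eventually (eventually_lt_nhds ht.1)]
      with k hk1 hk2
    exact ⟨inv_pos.2 (by exact_mod_cast Nat.lt_of_lt_of_le Nat.zero_lt_one hk1), hk2⟩
  have hseq : Tendsto (fun k : ℕ => t - (k:ℝ)⁻¹) atTop (𝓝[Set.Icc 0 1 \ {t}] t) := by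
    rw [tendsto_nhdsWithin_iff]
    constructor
    · simpa using tendsto_const_nhds.sub hinv
    · filter_upwards [hev] with k hk
      refine ⟨⟨by linarith [hk.2], by linarith [ht.2, hk.1]⟩, ?_⟩
      simp only [Set.mem_singleton_iff, sub_eq_self]
      exact ne_of_gt hk.1
  refine (hD.comp hseq).congr' ?_
  filter_upwards [hev] with k hk
  have h1 : slope F t (t - (k:ℝ)⁻¹) =
      ((t - (k:ℝ)⁻¹) - t)⁻¹ • (F (t - (k:ℝ)⁻¹) - F t) := rfl
  show slope F t (t - (k:ℝ)⁻¹) = (k:ℝ) • (F t - F (t - (k:ℝ)⁻¹))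
  rw [h1, show (t - (k:ℝ)⁻¹) - t = -(k:ℝ)⁻¹ by ring, inv_neg, inv_inv, neg_smul,
    ← smul_neg, neg_sub]

end aux

/-- If `f : [0,1] → X` is continuous, the discrete left difference quotients converge
uniformly on `(0,1]` to `g`, and `g t → g 0` as `t ↘ 0`, then `f` is continuously
differentiable on `[0,1]` with derivative `g`. -/
theorem stmt2
    {X : Type*} [NormedAddCommGroup X] [NormedSpace ℝ X] [CompleteSpace X]
    (f : ℝ → X) (g : ℝ → X)
    (hf : ContinuousOn f (Set.Icc 0 1))
    (hconv : ∀ ε > (0:ℝ), ∃ K : ℕ, ∀ k ≥ K, ∀ t ∈ Set.Icc ((k:ℝ)⁻¹) 1,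
      ‖(k:ℝ) • (f t - f (t - (k:ℝ)⁻¹)) - g t‖ ≤ ε)
    (hg0 : Filter.Tendsto g (nhdsWithin 0 (Set.Ioc 0 1)) (nhds (g 0))) :
    (∀ t ∈ Set.Icc (0:ℝ) 1, HasDerivWithinAt f (g t) (Set.Icc 0 1) t) ∧
      ContinuousOn g (Set.Icc 0 1) := by
  -- continuity of `g` on `(0,1]` from uniform convergence of continuous functions
  have hgIoc : ContinuousOn g (Set.Ioc 0 1) := by
    intro t ht
    set a : ℝ := t / 2 with ha
    have ha0 : 0 < a := by simp only [ha]; linarith [ht.1]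
    have hat : a < t := by linarith [ht.1]
    have hUnif : TendstoUniformlyOn
        (fun (k : ℕ) u => (k:ℝ) • (f u - f (u - (k:ℝ)⁻¹))) g atTop (Set.Icc a 1) := by
      rw [Metric.tendstoUniformlyOn_iff]
      intro ε hε
      obtain ⟨K, hK⟩ := hconv (ε/2) (by positivity)
      filter_upwards [(tendsto_inv_atTop_nhds_zero_nat (𝕜 := ℝ)).eventually
        (eventually_lt_nhds ha0), eventually_ge_atTop K] with k hk1 hk2 u hu
      rw [dist_eq_norm, norm_sub_rev]
      calc ‖(k:ℝ) • (f u - f (u - (k:ℝ)⁻¹)) - g u‖ ≤ ε/2 :=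
            hK k hk2 u ⟨le_trans hk1.le hu.1, hu.2⟩
        _ < ε := by linarith
    have hconts : ∀ᶠ k : ℕ in atTop,
        ContinuousOn (fun u => (k:ℝ) • (f u - f (u - (k:ℝ)⁻¹))) (Set.Icc a 1) := by
      filter_upwards [(tendsto_inv_atTop_nhds_zero_nat (𝕜 := ℝ)).eventually
        (eventually_lt_nhds ha0)] with k hk1
      have hknn : (0:ℝ) ≤ (k:ℝ)⁻¹ := inv_nonneg.2 (Nat.cast_nonneg k)
      refine continuousOn_const.smul (ContinuousOn.sub
        (hf.mono (Set.Icc_subset_Icc ha0.le le_rfl)) ?_)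
      refine hf.comp ((continuous_id.sub continuous_const).continuousOn) ?_
      intro u hu
      exact ⟨by simp; linarith [hu.1], by simp; linarith [hu.2]⟩
    have hga : ContinuousOn g (Set.Icc a 1) := hUnif.continuousOn hconts.frequently
    refine (hga t ⟨hat.le, ht.2⟩).mono_of_mem_nhdsWithin ?_
    refine mem_nhdsWithin.mpr ⟨Set.Ioi a, isOpen_Ioi, hat, ?_⟩
    rintro u ⟨hu1, hu2⟩
    exact ⟨le_of_lt hu1, hu2.2⟩
  have hgc : ContinuousOn g (Set.Icc 0 1) := by
    intro x hx
    rcases eq_or_lt_of_le hx.1 with h0 | h0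
    · obtain rfl : x = 0 := h0.symm
      rw [ContinuousWithinAt, ← Set.Ioc_insert_left (zero_le_one), nhdsWithin_insert]
      exact Filter.Tendsto.sup (tendsto_pure_nhds g 0) hg0
    · refine (hgIoc x ⟨h0, hx.2⟩).mono_of_mem_nhdsWithin ?_
      refine mem_nhdsWithin.mpr ⟨Set.Ioi 0, isOpen_Ioi, h0, ?_⟩
      rintro u ⟨hu1, hu2⟩
      exact ⟨hu1, hu2.2⟩
  -- the fundamental identity `f t - f s = ∫ s..t g`
  set F : ℝ → X := fun u => ∫ x in (0:ℝ)..u, f x with hFdef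
  have key : ∀ s t : ℝ, 0 < s → s ≤ t → t ≤ 1 → f t - f s = ∫ x in s..t, g x := by
    intro s t hs hst ht1
    have hs1 : s ≤ 1 := hst.trans ht1
    have hsm : s ∈ Set.Icc (0:ℝ) 1 := ⟨hs.le, hs1⟩
    have ht0 : 0 < t := hs.trans_le hst
    have htm : t ∈ Set.Icc (0:ℝ) 1 := ⟨ht0.le, ht1⟩
    have h0m : (0:ℝ) ∈ Set.Icc (0:ℝ) 1 := ⟨le_rfl, zero_le_one⟩
    have limit1 : Tendsto (fun k : ℕ =>
        (k:ℝ) • (F t - F (t - (k:ℝ)⁻¹)) - (k:ℝ) • (F s - F (s - (k:ℝ)⁻¹)))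
        atTop (𝓝 (f t - f s)) :=
      (aux_avg f hf ⟨ht0, ht1⟩).sub (aux_avg f hf ⟨hs, hs1⟩)
    have limit2 : Tendsto (fun k : ℕ =>
        (k:ℝ) • (F t - F (t - (k:ℝ)⁻¹)) - (k:ℝ) • (F s - F (s - (k:ℝ)⁻¹)))
        atTop (𝓝 (∫ x in s..t, g x)) := by
      rw [Metric.tendsto_atTop]
      intro ε hε
      obtain ⟨K, hK⟩ := hconv (ε/2) (by positivity)
      obtain ⟨N, hN⟩ := exists_nat_ge s⁻¹
      refine ⟨max K (max N 1), fun k hk => ?_⟩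
      have hkK : k ≥ K := le_trans (le_max_left _ _) hk
      have hkN : (s⁻¹ : ℝ) ≤ (k:ℝ) :=
        hN.trans (by exact_mod_cast le_trans (le_max_left _ _) (le_trans (le_max_right _ _) hk))
      have hk1 : (1:ℕ) ≤ k := le_trans (le_max_right _ _) (le_trans (le_max_right _ _) hk)
      have hkpos : (0:ℝ) < (k:ℝ) := by exact_mod_cast Nat.lt_of_lt_of_le Nat.zero_lt_one hk1
      set c : ℝ := (k:ℝ)⁻¹ with hc
      have hc0 : 0 < c := inv_pos.2 hkpos
      have hcs : c ≤ s := by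
        have := inv_anti₀ (inv_pos.2 hs) hkN
        rwa [inv_inv] at this
      have hsc : s - c ∈ Set.Icc (0:ℝ) 1 := ⟨by linarith, by linarith⟩
      have htc : t - c ∈ Set.Icc (0:ℝ) 1 := ⟨by linarith, by linarith⟩
      -- rewrite the k-th term as an integral
      have eA : F t - F (t - c) = ∫ x in (t-c)..t, f x :=
        intervalIntegral.integral_interval_sub_left (aux_int f hf h0m htm)
          (aux_int f hf h0m htc)
      have eB : F s - F (s - c) = ∫ x in (s-c)..s, f x :=
        intervalIntegral.integral_interval_sub_left (aux_int f hf h0m hsm)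
          (aux_int f hf h0m hsc)
      have e1 : (∫ x in (s-c)..s, f x) + ∫ x in s..t, f x = ∫ x in (s-c)..t, f x :=
        intervalIntegral.integral_add_adjacent_intervals (aux_int f hf hsc hsm)
          (aux_int f hf hsm htm)
      have e2 : (∫ x in (s-c)..(t-c), f x) + ∫ x in (t-c)..t, f x = ∫ x in (s-c)..t, f x :=
        intervalIntegral.integral_add_adjacent_intervals (aux_int f hf hsc htc)
          (aux_int f hf htc htm)
      have e3 : (∫ x in (t-c)..t, f x) - ∫ x in (s-c)..s, f x
          = (∫ x in s..t, f x) - ∫ x in (s-c)..(t-c), f x := by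
        have h := e1.trans e2.symm
        rw [sub_eq_sub_iff_add_eq_add]
        calc (∫ x in (t-c)..t, f x) + ∫ x in (s-c)..(t-c), f x
            = (∫ x in (s-c)..(t-c), f x) + ∫ x in (t-c)..t, f x := add_comm _ _
          _ = (∫ x in (s-c)..s, f x) + ∫ x in s..t, f x := h.symm
          _ = (∫ x in s..t, f x) + ∫ x in (s-c)..s, f x := add_comm _ _
      have hfc_cont : ContinuousOn (fun x : ℝ => f (x - c)) (Set.uIcc s t) := by
        refine hf.comp ((continuous_id.sub continuous_const).continuousOn) ?_
        intro u hu
        rw [Set.uIcc_of_le hst] at hu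
        exact ⟨by simp; linarith [hu.1], by simp; linarith [hu.2]⟩
      have hfc_int : IntervalIntegrable (fun x : ℝ => f (x - c)) volume s t :=
        hfc_cont.intervalIntegrable
      have hf_int : IntervalIntegrable f volume s t := aux_int f hf hsm htm
      have eC : ∫ x in s..t, (f x - f (x - c)) =
          (∫ x in s..t, f x) - ∫ x in (s-c)..(t-c), f x := by
        rw [intervalIntegral.integral_sub hf_int hfc_int,
          intervalIntegral.integral_comp_sub_right f c]
      have eD : (k:ℝ) • (F t - F (t - c)) - (k:ℝ) • (F s - F (s - c))
          = ∫ x in s..t, (k:ℝ) • (f x - f (x - c)) := by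
        rw [eA, eB, ← smul_sub, e3, ← eC, intervalIntegral.integral_smul]
      have hsm_int : IntervalIntegrable (fun x : ℝ => (k:ℝ) • (f x - f (x - c))) volume s t :=
        (continuousOn_const.smul ((hf.mono (Set.uIcc_subset_Icc hsm htm)).sub
          hfc_cont)).intervalIntegrable
      rw [dist_eq_norm, eD, ← intervalIntegral.integral_sub hsm_int (aux_int g hgc hsm htm)]
      have hbound : ∀ x ∈ Set.uIoc s t,
          ‖(k:ℝ) • (f x - f (x - c)) - g x‖ ≤ ε/2 := by
        intro x hx
        rw [Set.uIoc_of_le hst] at hx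
        exact hK k hkK x ⟨le_trans hcs (le_of_lt hx.1), hx.2.trans ht1⟩
      calc ‖∫ x in s..t, ((k:ℝ) • (f x - f (x - c)) - g x)‖
          ≤ (ε/2) * |t - s| :=
            intervalIntegral.norm_integral_le_of_norm_le_const hbound
        _ ≤ (ε/2) * 1 := by
            refine mul_le_mul_of_nonneg_left ?_ (by positivity)
            rw [abs_of_nonneg (by linarith)]
            linarith
        _ < ε := by linarith
    exact tendsto_nhds_unique limit1 limit2
  -- extend the identity to `s = 0`
  have key0 : ∀ t ∈ Set.Icc (0:ℝ) 1, f t = f 0 + ∫ x in (0:ℝ)..t, g x := by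
    intro t ht
    rcases eq_or_lt_of_le ht.1 with h0 | h0
    · obtain rfl : t = 0 := h0.symm
      simp
    · set G : ℝ → X := fun y => ∫ x in (0:ℝ)..y, g x with hGdef
      have h0m : (0:ℝ) ∈ Set.Icc (0:ℝ) 1 := ⟨le_rfl, zero_le_one⟩
      have hGc : ContinuousWithinAt G (Set.Icc 0 1) 0 :=
        (aux_ftc g hgc h0m).continuousWithinAt
      haveI : (𝓝[Set.Ioc (0:ℝ) t] 0).NeBot := by
        rw [nhdsWithin_Ioc_eq_nhdsGT h0]
        infer_instance
      have hsub : Set.Ioc (0:ℝ) t ⊆ Set.Icc 0 1 :=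
        fun u hu => ⟨hu.1.le, hu.2.trans ht.2⟩
      have hA : Tendsto (fun s => f t - f s) (𝓝[Set.Ioc (0:ℝ) t] 0) (𝓝 (f t - f 0)) :=
        tendsto_const_nhds.sub ((hf 0 h0m).mono_left (nhdsWithin_mono 0 hsub))
      have hB : Tendsto (fun s => G t - G s) (𝓝[Set.Ioc (0:ℝ) t] 0) (𝓝 (G t - G 0)) :=
        tendsto_const_nhds.sub (hGc.mono_left (nhdsWithin_mono 0 hsub))
      have hEq : ∀ᶠ s in 𝓝[Set.Ioc (0:ℝ) t] 0, f t - f s = G t - G s := by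
        filter_upwards [eventually_mem_nhdsWithin] with s hs
        rw [key s t hs.1 hs.2 ht.2]
        exact (intervalIntegral.integral_interval_sub_left
          (aux_int g hgc h0m ht) (aux_int g hgc h0m (hsub hs))).symm
      have huniq : f t - f 0 = G t - G 0 := tendsto_nhds_unique (hA.congr' hEq) hB
      have hG0 : G 0 = 0 := intervalIntegral.integral_same
      rw [hG0, sub_zero] at huniq
      exact eq_add_of_sub_eq' huniq
  refine ⟨?_, hgc⟩
  intro t ht
  have hD : HasDerivWithinAt (fun u => f 0 + ∫ x in (0:ℝ)..u, g x) (g t) (Set.Icc 0 1) t :=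
    (aux_ftc g hgc ht).const_add (f 0)
  exact hD.congr (fun y hy => key0 y hy) (key0 t ht)
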